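/- Let Γ be a countable group acting on a standard Borel space X by Borel automorphisms, and let μ and ν be finite Borel measures on X. Then μ(S) = ν(S) for every Γ-invariant Borel set S if and only if there exist Borel measures (μ_γ)_{γ∈Γ} on X with μ = ∑_γ μ_γ and ν = ∑_γ γ_*μ_γ. -/

import Mathlib

open MeasureTheory


private lemma thorisson_step {X : Type*} [MeasurableSpace X] (a b : Measure X) :
    ∃ q : Measure X × Measure X × Measure X,
      IsFiniteMeasure a → IsFiniteMeasure b →
        (a = q.2.1 + q.1 ∧ b = q.2.2 + q.1 ∧ q.2.1.MutuallySingular q.2.2 ∧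
         IsFiniteMeasure q.2.1 ∧ IsFiniteMeasure q.2.2) := by
  by_cases ha : IsFiniteMeasure a
  · by_cases hb : IsFiniteMeasure b
    · obtain ⟨s, hs, h1, h2⟩ := hahn_decomposition (μ := a) (ν := b)
      have hba : b.restrict s ≤ a.restrict s := by
        refine Measure.le_iff.2 fun t ht => ?_
        rw [Measure.restrict_apply ht, Measure.restrict_apply ht]
        exact h1 _ (ht.inter hs) Set.inter_subset_right
      have hab : a.restrict sᶜ ≤ b.restrict sᶜ := by
        refine Measure.le_iff.2 fun t ht => ?_
        rw [Measure.restrict_apply ht, Measure.restrict_apply ht]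
        exact h2 _ (ht.inter hs.compl) Set.inter_subset_right
      refine ⟨⟨b.restrict s + a.restrict sᶜ,
        a.restrict s - b.restrict s, b.restrict sᶜ - a.restrict sᶜ⟩, fun _ _ => ?_⟩
      have hA : a = (a.restrict s - b.restrict s) + (b.restrict s + a.restrict sᶜ) := by
        rw [← add_assoc, Measure.sub_add_cancel_of_le hba,
          Measure.restrict_add_restrict_compl hs]
      have hB : b = (b.restrict sᶜ - a.restrict sᶜ) + (b.restrict s + a.restrict sᶜ) := by
        rw [add_comm (b.restrict s), ← add_assoc, Measure.sub_add_cancel_of_le hab,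
          add_comm, Measure.restrict_add_restrict_compl hs]
      have ha' : (a.restrict s - b.restrict s) sᶜ = 0 := by
        have := Measure.le_iff'.1 (Measure.sub_le (μ := a.restrict s) (ν := b.restrict s)) sᶜ
        rwa [Measure.restrict_apply hs.compl, Set.compl_inter_self, measure_empty,
          nonpos_iff_eq_zero] at this
      have hb' : (b.restrict sᶜ - a.restrict sᶜ) s = 0 := by
        have := Measure.le_iff'.1 (Measure.sub_le (μ := b.restrict sᶜ) (ν := a.restrict sᶜ)) s
        rwa [Measure.restrict_apply hs, Set.inter_compl_self, measure_empty,
          nonpos_iff_eq_zero] at this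
      refine ⟨hA, hB, ⟨sᶜ, hs.compl, ha', by rwa [compl_compl]⟩, ?_, ?_⟩
      · exact isFiniteMeasure_of_le a (le_trans Measure.sub_le Measure.restrict_le_self)
      · exact isFiniteMeasure_of_le b (le_trans Measure.sub_le Measure.restrict_le_self)
    · exact ⟨⟨0, 0, 0⟩, fun _ h => absurd h hb⟩
  · exact ⟨⟨0, 0, 0⟩, fun h => absurd h ha⟩

private lemma thorisson_regroup {Γ : Type*} [Countable Γ] (f : ℕ → Γ) (g : ℕ → ENNReal) :
    ∑' γ : Γ, ∑' p : {n // f n = γ}, g p.1 = ∑' n, g n := by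
  calc ∑' γ : Γ, ∑' p : {n // f n = γ}, g p.1
      = ∑' q : Σ γ : Γ, {n // f n = γ}, g q.2.1 :=
        (ENNReal.tsum_sigma' (fun q : Σ γ : Γ, {n // f n = γ} => g q.2.1)).symm
    _ = ∑' n, g n := (Equiv.sigmaFiberEquiv f).tsum_eq g

/-- Thorisson's theorem: if a countable group `Γ` acts on a standard Borel
space `X` by Borel automorphisms and `μ`, `ν` are finite Borel measures on
`X`, then `μ` and `ν` agree on every `Γ`-invariant Borel set iff there are
Borel measures `(m γ)_{γ ∈ Γ}` with `μ = ∑_γ m γ` and `ν = ∑_γ γ_* (m γ)`. -/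
theorem thorisson {X : Type*} [MeasurableSpace X] [StandardBorelSpace X]
    {Γ : Type*} [Group Γ] [Countable Γ]
    (act : Γ → X → X) (hmeas : ∀ γ, Measurable (act γ))
    (hone : ∀ x, act 1 x = x)
    (hmul : ∀ γ δ x, act γ (act δ x) = act (γ * δ) x)
    (μ ν : Measure X) [IsFiniteMeasure μ] [IsFiniteMeasure ν] :
    (∀ S : Set X, MeasurableSet S → (∀ γ, act γ ⁻¹' S = S) → μ S = ν S) ↔
      ∃ m : Γ → Measure X, μ = Measure.sum m ∧
        ν = Measure.sum (fun γ => (m γ).map (act γ)) := by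
  -- basic facts about the action
  have pre_pre : ∀ (γ δ : Γ) (B : Set X), act δ ⁻¹' (act γ ⁻¹' B) = act (γ * δ) ⁻¹' B := by
    intro γ δ B; ext x; simp [Set.mem_preimage, hmul]
  have pre_one : ∀ B : Set X, act (1 : Γ) ⁻¹' B = B := by
    intro B; ext x; simp [Set.mem_preimage, hone]
  have act_one : act (1 : Γ) = id := funext hone
  have map_one : ∀ ρ : Measure X, ρ.map (act (1 : Γ)) = ρ := by
    intro ρ; rw [act_one, Measure.map_id]
  have map_map_gen : ∀ (γ δ : Γ) (ρ : Measure X),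
      (ρ.map (act δ)).map (act γ) = ρ.map (act (γ * δ)) := by
    intro γ δ ρ
    rw [Measure.map_map (hmeas γ) (hmeas δ)]
    congr 1
    funext x
    exact hmul γ δ x
  have map_inv_map : ∀ (γ : Γ) (ρ : Measure X), (ρ.map (act γ⁻¹)).map (act γ) = ρ := by
    intro γ ρ; rw [map_map_gen, mul_inv_cancel, map_one]
  have map_map_inv : ∀ (γ : Γ) (ρ : Measure X), (ρ.map (act γ)).map (act γ⁻¹) = ρ := by
    intro γ ρ; rw [map_map_gen, inv_mul_cancel, map_one]
  constructor
  swap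
  · rintro ⟨m, hμ, hν⟩ S hS hSinv
    rw [hμ, hν, Measure.sum_apply _ hS, Measure.sum_apply _ hS]
    exact tsum_congr fun γ => by rw [Measure.map_apply (hmeas γ) hS, hSinv γ]
  intro hinv
  have : Nonempty Γ := ⟨1⟩
  obtain ⟨f, hf⟩ := exists_surjective_nat Γ
  -- the greedy recursion
  set F : Measure X → Measure X → Measure X × Measure X × Measure X :=
    fun a b => (thorisson_step a b).choose with hFdef
  have hF : ∀ a b : Measure X, IsFiniteMeasure a → IsFiniteMeasure b →
      (a = (F a b).2.1 + (F a b).1 ∧ b = (F a b).2.2 + (F a b).1 ∧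
       (F a b).2.1.MutuallySingular (F a b).2.2 ∧
       IsFiniteMeasure (F a b).2.1 ∧ IsFiniteMeasure (F a b).2.2) :=
    fun a b => (thorisson_step a b).choose_spec
  set G : ℕ → Measure X × Measure X → Measure X × Measure X := fun n p =>
    ((F p.1 (p.2.map (act (f n)⁻¹))).2.1,
     ((F p.1 (p.2.map (act (f n)⁻¹))).2.2).map (act (f n))) with hGdef
  set seq : ℕ → Measure X × Measure X :=
    fun n => Nat.rec (motive := fun _ => Measure X × Measure X) (μ, ν) G n with hseqdef
  have seq_zero : seq 0 = (μ, ν) := rfl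
  have seq_succ : ∀ n, seq (n + 1) = G n (seq n) := fun n => rfl
  set mseq : ℕ → Measure X := fun n => (F (seq n).1 ((seq n).2.map (act (f n)⁻¹))).1
    with hmseqdef
  -- finiteness along the recursion
  have fin : ∀ n, IsFiniteMeasure (seq n).1 ∧ IsFiniteMeasure (seq n).2 := by
    intro n
    induction n with
    | zero => exact ⟨by rw [seq_zero]; infer_instance, by rw [seq_zero]; infer_instance⟩
    | succ n ih =>
      haveI := ih.1; haveI := ih.2
      have h := hF (seq n).1 ((seq n).2.map (act (f n)⁻¹)) ih.1 inferInstance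
      rw [seq_succ]
      exact ⟨h.2.2.2.1, by haveI := h.2.2.2.2; infer_instance⟩
  have hstep : ∀ n, (seq n).1 = (seq (n + 1)).1 + mseq n ∧
      (seq n).2 = (seq (n + 1)).2 + (mseq n).map (act (f n)) ∧
      (seq (n + 1)).1.MutuallySingular (((seq (n + 1)).2).map (act (f n)⁻¹)) := by
    intro n
    haveI := (fin n).1; haveI := (fin n).2
    have h := hF (seq n).1 ((seq n).2.map (act (f n)⁻¹)) (fin n).1 inferInstance
    refine ⟨by rw [seq_succ]; exact h.1, ?_, ?_⟩
    · have hb := h.2.1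
      have := congrArg (fun ρ => ρ.map (act (f n))) hb
      rw [map_inv_map] at this
      rw [seq_succ]
      rw [this, Measure.map_add _ _ (hmeas (f n))]
    · rw [seq_succ]
      show (F _ _).2.1.MutuallySingular ((((F _ _).2.2).map (act (f n))).map (act (f n)⁻¹))
      rw [map_map_inv]
      exact h.2.2.1
  -- partial sums
  have partial1 : ∀ n, μ = (∑ k ∈ Finset.range n, mseq k) + (seq n).1 := by
    intro n
    induction n with
    | zero => simp [seq_zero]
    | succ n ih =>
      rw [Finset.sum_range_succ, ih, (hstep n).1]
      abel
  have partial2 : ∀ n,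
      ν = (∑ k ∈ Finset.range n, (mseq k).map (act (f k))) + (seq n).2 := by
    intro n
    induction n with
    | zero => simp [seq_zero]
    | succ n ih =>
      rw [Finset.sum_range_succ, ih, (hstep n).2.1]
      abel
  set M : Measure X := Measure.sum mseq with hMdef
  set N : Measure X := Measure.sum (fun n => (mseq n).map (act (f n))) with hNdef
  have hfinsum1 : ∀ n, (∑ k ∈ Finset.range n, mseq k) ≤ M := by
    intro n
    refine Measure.le_iff.2 fun t ht => ?_
    rw [Measure.sum_apply _ ht]
    calc (∑ k ∈ Finset.range n, mseq k) t = ∑ k ∈ Finset.range n, mseq k t := by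
          simp [Measure.finset_sum_apply]
      _ ≤ ∑' k, mseq k t := ENNReal.sum_le_tsum _
  have hfinsum2 : ∀ n, (∑ k ∈ Finset.range n, (mseq k).map (act (f k))) ≤ N := by
    intro n
    refine Measure.le_iff.2 fun t ht => ?_
    rw [Measure.sum_apply _ ht]
    calc (∑ k ∈ Finset.range n, (mseq k).map (act (f k))) t
        = ∑ k ∈ Finset.range n, ((mseq k).map (act (f k))) t := by
          simp [Measure.finset_sum_apply]
      _ ≤ ∑' k, ((mseq k).map (act (f k))) t := ENNReal.sum_le_tsum _
  have hMle : M ≤ μ := by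
    refine Measure.le_iff.2 fun t ht => ?_
    rw [Measure.sum_apply _ ht, ENNReal.tsum_eq_iSup_sum]
    refine iSup_le fun I => ?_
    obtain ⟨n, hn⟩ := I.exists_nat_subset_range
    calc ∑ k ∈ I, mseq k t ≤ ∑ k ∈ Finset.range n, mseq k t :=
          Finset.sum_le_sum_of_subset hn
      _ = (∑ k ∈ Finset.range n, mseq k) t := by simp [Measure.finset_sum_apply]
      _ ≤ μ t := by
          conv_rhs => rw [partial1 n]
          exact le_add_right le_rfl
  have hNle : N ≤ ν := by
    refine Measure.le_iff.2 fun t ht => ?_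
    rw [Measure.sum_apply _ ht, ENNReal.tsum_eq_iSup_sum]
    refine iSup_le fun I => ?_
    obtain ⟨n, hn⟩ := I.exists_nat_subset_range
    calc ∑ k ∈ I, ((mseq k).map (act (f k))) t
        ≤ ∑ k ∈ Finset.range n, ((mseq k).map (act (f k))) t :=
          Finset.sum_le_sum_of_subset hn
      _ = (∑ k ∈ Finset.range n, (mseq k).map (act (f k))) t := by
          simp [Measure.finset_sum_apply]
      _ ≤ ν t := by
          conv_rhs => rw [partial2 n]
          exact le_add_right le_rfl
  haveI : IsFiniteMeasure M := isFiniteMeasure_of_le μ hMle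
  haveI : IsFiniteMeasure N := isFiniteMeasure_of_le ν hNle
  set μinf : Measure X := μ - M with hμinfdef
  set νinf : Measure X := ν - N with hνinfdef
  have hμdec : μ = M + μinf := by
    rw [hμinfdef, add_comm, Measure.sub_add_cancel_of_le hMle]
  have hνdec : ν = N + νinf := by
    rw [hνinfdef, add_comm, Measure.sub_add_cancel_of_le hNle]
  have hμinf_le : ∀ n, μinf ≤ (seq n).1 := by
    intro n
    refine Measure.sub_le_of_le_add ?_
    rw [add_comm]
    calc μ = (∑ k ∈ Finset.range n, mseq k) + (seq n).1 := partial1 n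
      _ ≤ M + (seq n).1 := add_le_add (hfinsum1 n) le_rfl
  have hνinf_le : ∀ n, νinf ≤ (seq n).2 := by
    intro n
    refine Measure.sub_le_of_le_add ?_
    rw [add_comm]
    calc ν = (∑ k ∈ Finset.range n, (mseq k).map (act (f k))) + (seq n).2 := partial2 n
      _ ≤ N + (seq n).2 := add_le_add (hfinsum2 n) le_rfl
  -- residual singularity
  have hsing : ∀ γ : Γ, μinf.MutuallySingular (νinf.map (act γ⁻¹)) := by
    intro γ
    obtain ⟨n, rfl⟩ := hf γ
    exact ((hstep n).2.2.mono (hμinf_le (n + 1))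
      (Measure.map_mono (hνinf_le (n + 1)) (hmeas (f n)⁻¹)))
  have hsing' : ∀ γ : Γ, μinf.MutuallySingular (νinf.map (act γ)) := by
    intro γ
    have := hsing γ⁻¹
    rwa [inv_inv] at this
  have map_ms : ∀ (δ : Γ) (p q : Measure X), p.MutuallySingular q →
      (p.map (act δ)).MutuallySingular (q.map (act δ)) := by
    rintro δ p q ⟨A, hA, hpA, hqA⟩
    refine ⟨act δ⁻¹ ⁻¹' A, hmeas δ⁻¹ hA, ?_, ?_⟩
    · rw [Measure.map_apply (hmeas δ) (hmeas δ⁻¹ hA), pre_pre, inv_mul_cancel, pre_one]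
      exact hpA
    · rw [← Set.preimage_compl, Measure.map_apply (hmeas δ) (hmeas δ⁻¹ hA.compl),
        pre_pre, inv_mul_cancel, pre_one]
      exact hqA
  have pair : ∀ δ γ : Γ, (μinf.map (act δ)).MutuallySingular (νinf.map (act γ)) := by
    intro δ γ
    have h := map_ms δ _ _ (hsing' (δ⁻¹ * γ))
    rwa [map_map_gen, mul_inv_cancel_left] at h
  set α : Measure X := Measure.sum (fun δ : Γ => μinf.map (act δ)) with hαdef
  set β : Measure X := Measure.sum (fun γ : Γ => νinf.map (act γ)) with hβdef
  have hαβ : α.MutuallySingular β :=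
    Measure.MutuallySingular.sum_left.2 fun δ =>
      Measure.MutuallySingular.sum_right.2 fun γ => pair δ γ
  obtain ⟨A, hA, hαA, hβA⟩ := hαβ
  set S : Set X := ⋃ γ : Γ, act γ ⁻¹' A with hSdef
  have hSmeas : MeasurableSet S := MeasurableSet.iUnion fun γ => hmeas γ hA
  have hSinv : ∀ δ, act δ ⁻¹' S = S := by
    intro δ
    rw [hSdef, Set.preimage_iUnion]
    ext x
    simp only [Set.mem_iUnion, Set.mem_preimage]
    constructor
    · rintro ⟨γ, h⟩
      rw [hmul] at h
      exact ⟨γ * δ, h⟩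
    · rintro ⟨γ, h⟩
      refine ⟨γ * δ⁻¹, ?_⟩
      rw [hmul, inv_mul_cancel_right]
      exact h
  have hμinfα : μinf ≤ α := by
    calc μinf = μinf.map (act (1 : Γ)) := (map_one μinf).symm
      _ ≤ α := Measure.le_sum _ 1
  have hνinfβ : νinf ≤ β := by
    calc νinf = νinf.map (act (1 : Γ)) := (map_one νinf).symm
      _ ≤ β := Measure.le_sum _ 1
  have hαS : α S = 0 := by
    refine measure_iUnion_null fun γ => ?_
    rw [hαdef, Measure.sum_apply _ (hmeas γ hA)]
    refine ENNReal.tsum_eq_zero.2 fun δ => ?_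
    rw [Measure.map_apply (hmeas δ) (hmeas γ hA), pre_pre]
    have h1 : μinf (act (γ * δ) ⁻¹' A) = (μinf.map (act (γ * δ))) A :=
      (Measure.map_apply (hmeas (γ * δ)) hA).symm
    rw [h1]
    have h2 : (μinf.map (act (γ * δ))) A ≤ α A := Measure.le_iff'.1 (Measure.le_sum _ (γ * δ)) A
    exact le_antisymm (h2.trans hαA.le) (zero_le)
  have hμinfS : μinf S = 0 :=
    le_antisymm ((Measure.le_iff'.1 hμinfα S).trans hαS.le) (zero_le)
  have hAS : A ⊆ S := by
    rw [hSdef]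
    intro x hx
    exact Set.mem_iUnion.2 ⟨1, by rwa [pre_one]⟩
  have hνinfSc : νinf Sᶜ = 0 := by
    refine le_antisymm ?_ (zero_le)
    calc νinf Sᶜ ≤ β Sᶜ := Measure.le_iff'.1 hνinfβ Sᶜ
      _ ≤ β Aᶜ := measure_mono (Set.compl_subset_compl.2 hAS)
      _ = 0 := hβA
  -- residual equality on invariant sets
  have resid : ∀ T : Set X, MeasurableSet T → (∀ γ, act γ ⁻¹' T = T) →
      μinf T = νinf T := by
    intro T hT hTinv
    have h1 : μ T = M T + μinf T := by rw [hμdec]; rfl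
    have h2 : ν T = N T + νinf T := by rw [hνdec]; rfl
    have h3 : M T = N T := by
      rw [hMdef, hNdef, Measure.sum_apply _ hT, Measure.sum_apply _ hT]
      refine tsum_congr fun n => ?_
      rw [Measure.map_apply (hmeas (f n)) hT, hTinv]
    have h4 : M T ≠ ⊤ := (lt_of_le_of_lt (Measure.le_iff'.1 hMle T) (measure_lt_top μ T)).ne
    have h5 := hinv T hT hTinv
    rw [h1, h2, ← h3] at h5
    exact (ENNReal.add_right_inj h4).1 h5
  have hνinf0 : νinf = 0 := by
    have hS0 : νinf S = 0 := by rw [← resid S hSmeas hSinv]; exact hμinfS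
    refine Measure.measure_univ_eq_zero.1 ?_
    rw [← Set.union_compl_self S]
    exact le_antisymm ((measure_union_le _ _).trans (by rw [hS0, hνinfSc, add_zero])) (zero_le)
  have hμinf0 : μinf = 0 := by
    have hScinv : ∀ γ, act γ ⁻¹' Sᶜ = Sᶜ := fun γ => by
      rw [Set.preimage_compl, hSinv]
    have hSc0 : μinf Sᶜ = 0 := by
      rw [resid Sᶜ hSmeas.compl hScinv]
      rw [hνinf0]; rfl
    refine Measure.measure_univ_eq_zero.1 ?_
    rw [← Set.union_compl_self S]
    exact le_antisymm ((measure_union_le _ _).trans (by rw [hμinfS, hSc0, add_zero])) (zero_le)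
  have hμM : μ = M := by rw [hμdec, hμinf0, add_zero]
  have hνN : ν = N := by rw [hνdec, hνinf0, add_zero]
  -- regroup over fibers of f
  refine ⟨fun γ => Measure.sum (fun p : {n // f n = γ} => mseq p.1), ?_, ?_⟩
  · rw [hμM, hMdef]
    ext s hs
    rw [Measure.sum_apply _ hs, Measure.sum_apply _ hs]
    have : ∀ γ : Γ, (Measure.sum (fun p : {n // f n = γ} => mseq p.1)) s
        = ∑' p : {n // f n = γ}, mseq p.1 s := fun γ => Measure.sum_apply _ hs
    rw [tsum_congr this, thorisson_regroup f (fun n => mseq n s)]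
  · rw [hνN, hNdef]
    ext s hs
    rw [Measure.sum_apply _ hs, Measure.sum_apply _ hs]
    have hterm : ∀ γ : Γ, ((Measure.sum (fun p : {n // f n = γ} => mseq p.1)).map (act γ)) s
        = ∑' p : {n // f n = γ}, mseq p.1 (act (f p.1) ⁻¹' s) := by
      intro γ
      rw [Measure.map_apply (hmeas γ) hs, Measure.sum_apply _ (hmeas γ hs)]
      exact tsum_congr fun p => by rw [p.2]
    rw [tsum_congr hterm, thorisson_regroup f (fun n => mseq n (act (f n) ⁻¹' s))]
    exact tsum_congr fun n => Measure.map_apply (hmeas (f n)) hs
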